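/- For k ≥ 2 and n_1, …, n_k ≥ 1, the edge-labeled tree (T[n_1,…,n_k], λ*) explains the complete multipartite graph K_{n_1,…,n_k}: its leaf set is partitioned into sets L_1, …, L_k with |L_i| = n_i such that two distinct leaves are adjacent in the Fitch graph explained by (T[n_1,…,n_k], λ*) if and only if they lie in different sets L_i, L_j. -/

import Mathlib

open SimpleGraph

/-- A leaf of a graph is a vertex with exactly one neighbour (i.e. a vertex of degree 1). -/
def SimpleGraph.IsLeaf {V : Type*} (T : SimpleGraph V) (v : V) : Prop :=
  ∃! u, T.Adj v u

/-- The undirected Fitch graph explained by an edge-labelled tree `(T, lam)`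
(labels: `true` = 1, `false` = 0): its vertices are the leaves of `T`, and two
distinct leaves are adjacent iff the (unique) path between them in `T` contains
at least one edge labelled `1`. -/
def fitchGraph {V : Type*} (T : SimpleGraph V) (lam : Sym2 V → Bool) :
    SimpleGraph {v : V // T.IsLeaf v} where
  Adj x y := x ≠ y ∧ ∃ p : T.Walk x.1 y.1, p.IsPath ∧ ∃ e ∈ p.edges, lam e = true
  symm := by
    constructor
    rintro x y ⟨hxy, p, hp, e, he, hl⟩
    exact ⟨hxy.symm, p.reverse, hp.reverse, e, by
      rw [SimpleGraph.Walk.edges_reverse]; exact List.mem_reverse.mpr he, hl⟩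
  loopless := by constructor; rintro x ⟨hx, -⟩; exact hx rfl

/-- A graph is an undirected Fitch graph if it is isomorphic to the Fitch graph
explained by some edge-labelled finite tree. -/
def IsFitchGraph {W : Type*} (G : SimpleGraph W) : Prop :=
  ∃ (V : Type) (T : SimpleGraph V) (lam : Sym2 V → Bool),
    Finite V ∧ T.IsTree ∧ Nonempty (G ≃g fitchGraph T lam)

/-- The vertex type of the tree `T[n₁,…,n_k]`: `none` is the root `r`,
`some ⟨i, none⟩` is the child `c_i` of the root, and `some ⟨i, some j⟩` is the
`j`-th leaf child of `c_i` (which exists only when `n_i ≥ 2`; when `n_i = 1`,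
the vertex `c_i` itself is a leaf). -/
abbrev FitchTreeVert (k : ℕ) (n : Fin k → ℕ) : Type :=
  Option (Σ i : Fin k, Option (Fin (if 2 ≤ n i then n i else 0)))

/-- The tree `T[n₁,…,n_k]`: the root is adjacent to each `c_i`, and `c_i` is
adjacent to each of its leaf children. -/
def fitchTree (k : ℕ) (n : Fin k → ℕ) : SimpleGraph (FitchTreeVert k n) :=
  SimpleGraph.fromRel fun x y =>
    (x = none ∧ ∃ i, y = some ⟨i, none⟩) ∨
    (∃ i j, x = some ⟨i, none⟩ ∧ y = some ⟨i, some j⟩)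

/-- The labelling `λ*`: an edge is labelled `1` iff it is incident to the root. -/
def lamStar (k : ℕ) (n : Fin k → ℕ) : Sym2 (FitchTreeVert k n) → Bool :=
  fun e => decide ((none : FitchTreeVert k n) ∈ e)
section FitchAux

variable {k : ℕ} {n : Fin k → ℕ}

lemma ft_adj {x y : FitchTreeVert k n} :
    (fitchTree k n).Adj x y ↔ x ≠ y ∧
      ((x = none ∧ ∃ i, y = some ⟨i, none⟩) ∨
       (∃ i j, x = some ⟨i, none⟩ ∧ y = some ⟨i, some j⟩) ∨
       (y = none ∧ ∃ i, x = some ⟨i, none⟩) ∨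
       (∃ i j, y = some ⟨i, none⟩ ∧ x = some ⟨i, some j⟩)) := by
  rw [fitchTree, SimpleGraph.fromRel_adj]
  constructor
  · rintro ⟨hne, (h | h) | (h | h)⟩
    · exact ⟨hne, Or.inl h⟩
    · exact ⟨hne, Or.inr (Or.inl h)⟩
    · exact ⟨hne, Or.inr (Or.inr (Or.inl h))⟩
    · exact ⟨hne, Or.inr (Or.inr (Or.inr h))⟩
  · rintro ⟨hne, h | h | h | h⟩
    · exact ⟨hne, Or.inl (Or.inl h)⟩
    · exact ⟨hne, Or.inl (Or.inr h)⟩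
    · exact ⟨hne, Or.inr (Or.inl h)⟩
    · exact ⟨hne, Or.inr (Or.inr h)⟩

lemma adj_root_child (i : Fin k) :
    (fitchTree k n).Adj none (some ⟨i, none⟩) :=
  ft_adj.2 ⟨by simp, Or.inl ⟨rfl, i, rfl⟩⟩

lemma adj_child_grand (i : Fin k) (j : Fin (if 2 ≤ n i then n i else 0)) :
    (fitchTree k n).Adj (some ⟨i, none⟩) (some ⟨i, some j⟩) :=
  ft_adj.2 ⟨by simp, Or.inr (Or.inl ⟨i, j, rfl, rfl⟩)⟩

lemma grand_adj {i : Fin k} {j : Fin (if 2 ≤ n i then n i else 0)}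
    {u : FitchTreeVert k n} (h : (fitchTree k n).Adj (some ⟨i, some j⟩) u) :
    u = some ⟨i, none⟩ := by
  rcases ft_adj.1 h with ⟨-, h⟩
  rcases h with ⟨h, -⟩ | ⟨i', j', h, -⟩ | ⟨-, i', h⟩ | ⟨i', j', h1, h2⟩
  · simp at h
  · rw [Option.some.injEq] at h
    obtain ⟨rfl, hh⟩ := Sigma.mk.inj_iff.mp h
    simp at hh
  · rw [Option.some.injEq] at h
    obtain ⟨rfl, hh⟩ := Sigma.mk.inj_iff.mp h
    simp at hh
  · rw [Option.some.injEq] at h2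
    obtain ⟨rfl, -⟩ := Sigma.mk.inj_iff.mp h2
    exact h1

lemma child_adj {i : Fin k} {u : FitchTreeVert k n}
    (h : (fitchTree k n).Adj (some ⟨i, none⟩) u) :
    u = none ∨ ∃ j, u = some ⟨i, some j⟩ := by
  rcases ft_adj.1 h with ⟨-, h⟩
  rcases h with ⟨h, -⟩ | ⟨i', j', h1, h2⟩ | ⟨h, -⟩ | ⟨i', j', h1, h2⟩
  · simp at h
  · rw [Option.some.injEq] at h1
    obtain ⟨rfl, -⟩ := Sigma.mk.inj_iff.mp h1
    exact Or.inr ⟨j', h2⟩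
  · exact Or.inl h
  · rw [Option.some.injEq] at h2
    obtain ⟨rfl, hh⟩ := Sigma.mk.inj_iff.mp h2
    simp at hh

lemma isLeaf_grand (i : Fin k) (j : Fin (if 2 ≤ n i then n i else 0)) :
    (fitchTree k n).IsLeaf (some ⟨i, some j⟩) :=
  ⟨some ⟨i, none⟩, (adj_child_grand i j).symm, fun _ h => grand_adj h⟩

lemma isLeaf_child {i : Fin k} (h : ¬ 2 ≤ n i) :
    (fitchTree k n).IsLeaf (some ⟨i, none⟩) := by
  refine ⟨none, (adj_root_child i).symm, fun u hu => ?_⟩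
  rcases child_adj hu with h' | ⟨j, h'⟩
  · exact h'
  · exact ((Fin.cast (if_neg h) j)).elim0

lemma not_isLeaf_child {i : Fin k} (h2 : 2 ≤ n i) :
    ¬ (fitchTree k n).IsLeaf (some ⟨i, none⟩) := by
  rintro ⟨u, -, hu⟩
  have j0 : Fin (if 2 ≤ n i then n i else 0) := ⟨0, by rw [if_pos h2]; omega⟩
  have h1 := hu none (adj_root_child i).symm
  have h2' := hu (some ⟨i, some j0⟩) (adj_child_grand i j0)
  rw [← h1] at h2'
  simp at h2'

lemma not_isLeaf_root (hk : 2 ≤ k) : ¬ (fitchTree k n).IsLeaf none := by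
  rintro ⟨u, -, hu⟩
  have h0 := hu (some ⟨⟨0, by omega⟩, none⟩) (adj_root_child _)
  have h1 := hu (some ⟨⟨1, by omega⟩, none⟩) (adj_root_child _)
  rw [← h0] at h1
  rw [Option.some.injEq] at h1
  obtain ⟨hh, -⟩ := Sigma.mk.inj_iff.mp h1
  simp [Fin.ext_iff] at hh

lemma leaf_shape (hk : 2 ≤ k) {v : FitchTreeVert k n}
    (h : (fitchTree k n).IsLeaf v) : ∃ i o, v = some ⟨i, o⟩ := by
  cases v with
  | none => exact absurd h (not_isLeaf_root hk)
  | some s => exact ⟨s.1, s.2, rfl⟩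

lemma exists_adj_mem_support {V : Type*} {G : SimpleGraph V} {a b : V}
    (w : G.Walk a b) (hab : a ≠ b) : ∃ c, G.Adj c b ∧ c ∈ w.support := by
  induction w with
  | nil => exact absurd rfl hab
  | @cons u v b' h q ih =>
    by_cases hvb : v = b'
    · subst hvb
      exact ⟨u, h, by simp⟩
    · obtain ⟨c, hc1, hc2⟩ := ih hvb
      exact ⟨c, hc1, by simp [hc2]⟩

lemma no_root_edge {i : Fin k} {j j' : Fin (if 2 ≤ n i then n i else 0)}
    {a b : FitchTreeVert k n} (ha : a = some ⟨i, some j⟩)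
    (hb : b = some ⟨i, some j'⟩) (p : (fitchTree k n).Walk a b)
    (hp : p.IsPath) : ∀ e ∈ p.edges, (none : FitchTreeVert k n) ∉ e := by
  subst ha
  cases p with
  | nil => simp
  | @cons _ u _ h q =>
    have hu : u = some ⟨i, none⟩ := grand_adj h
    subst hu
    cases q with
    | nil => simp at hb
    | @cons _ w _ h2 q2 =>
      rw [Walk.cons_isPath_iff, Walk.cons_isPath_iff] at hp
      have hnotmem : some ⟨i, none⟩ ∉ q2.support := hp.1.2
      have hq2path : q2.IsPath := hp.1.1
      rcases child_adj h2 with hw | ⟨m, hw⟩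
      · subst hw
        have hbne : (none : FitchTreeVert k n) ≠ b := by rw [hb]; simp
        obtain ⟨c, hc1, hc2⟩ := exists_adj_mem_support q2 hbne
        rw [hb] at hc1
        have : c = some ⟨i, none⟩ := grand_adj hc1.symm
        rw [this] at hc2
        exact absurd hc2 hnotmem
      · subst hw
        by_cases hwb : (some ⟨i, some m⟩ : FitchTreeVert k n) = b
        · subst hwb
          have : q2 = Walk.nil := Walk.isPath_iff_eq_nil.1 hq2path
          subst this
          intro e he
          simp only [Walk.edges_cons, Walk.edges_nil, List.mem_cons,
            List.not_mem_nil, or_false] at he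
          rcases he with rfl | rfl <;> simp [Sym2.mem_iff]
        · cases q2 with
          | nil => exact absurd rfl hwb
          | @cons _ z _ h3 q3 =>
            have hz : z = some ⟨i, none⟩ := grand_adj h3
            subst hz
            exact absurd (by simp) hnotmem

lemma ncard_L {i : Fin k} (hn1 : 1 ≤ n i) :
    {v : {v : FitchTreeVert k n // (fitchTree k n).IsLeaf v} |
      ∃ o, v.1 = some ⟨i, o⟩}.ncard = n i := by
  by_cases h2 : 2 ≤ n i
  · have hL : {v : {v : FitchTreeVert k n // (fitchTree k n).IsLeaf v} |
        ∃ o, v.1 = some ⟨i, o⟩} =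
        (fun m : Fin (n i) =>
          (⟨some ⟨i, some (Fin.cast (if_pos h2).symm m)⟩, isLeaf_grand i _⟩ :
            {v : FitchTreeVert k n // (fitchTree k n).IsLeaf v})) '' Set.univ := by
      ext v
      simp only [Set.mem_setOf_eq, Set.image_univ, Set.mem_range]
      constructor
      · rintro ⟨o, ho⟩
        cases o with
        | none =>
          exfalso
          have hv := v.2
          rw [ho] at hv
          exact not_isLeaf_child h2 hv
        | some m =>
          refine ⟨Fin.cast (if_pos h2) m, ?_⟩
          apply Subtype.ext
          rw [ho]
          have hc : Fin.cast (if_pos h2).symm (Fin.cast (if_pos h2) m) = m := by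
            apply Fin.ext
            simp
          rw [hc]
      · rintro ⟨m, rfl⟩
        exact ⟨_, rfl⟩
    have hinj : Function.Injective (fun m : Fin (n i) =>
        (⟨some ⟨i, some (Fin.cast (if_pos h2).symm m)⟩, isLeaf_grand i _⟩ :
          {v : FitchTreeVert k n // (fitchTree k n).IsLeaf v})) := by
      intro a b hab
      have h1 := congrArg Subtype.val hab
      simp only [Option.some.injEq] at h1
      obtain ⟨-, hh⟩ := Sigma.mk.inj_iff.mp h1
      rw [heq_iff_eq, Option.some.injEq] at hh
      exact Fin.ext (by simpa using congrArg Fin.val hh)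
    rw [hL, Set.ncard_image_of_injective _ hinj, Set.ncard_univ,
      Nat.card_eq_fintype_card, Fintype.card_fin]
  · have h1 : n i = 1 := by omega
    have hL : {v : {v : FitchTreeVert k n // (fitchTree k n).IsLeaf v} |
        ∃ o, v.1 = some ⟨i, o⟩} =
        {⟨some ⟨i, none⟩, isLeaf_child h2⟩} := by
      ext v
      simp only [Set.mem_setOf_eq, Set.mem_singleton_iff]
      constructor
      · rintro ⟨o, ho⟩
        cases o with
        | none => exact Subtype.ext ho
        | some m => exact (Fin.cast (if_neg h2) m).elim0
      · rintro rfl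
        exact ⟨none, rfl⟩
    rw [hL, Set.ncard_singleton, h1]

end FitchAux
/-- for `k ≥ 2` and `n₁, …, n_k ≥ 1`, the edge-labelled tree
`(T[n₁,…,n_k], λ*)` explains the complete multipartite graph `K_{n₁,…,n_k}`:
its leaf set can be partitioned into sets `L₁, …, L_k` with `|L_i| = n_i` such
that two leaves are adjacent in the explained Fitch graph iff they lie in
different parts. -/
theorem fitchTree_explains_completeMultipartite (k : ℕ) (hk : 2 ≤ k)
    (n : Fin k → ℕ) (hn : ∀ i, 1 ≤ n i) :
    ∃ L : Fin k → Set {v : FitchTreeVert k n // (fitchTree k n).IsLeaf v},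
      (Pairwise fun i j => Disjoint (L i) (L j)) ∧
      (⋃ i, L i) = Set.univ ∧
      (∀ i, (L i).ncard = n i) ∧
      ∀ x y, (fitchGraph (fitchTree k n) (lamStar k n)).Adj x y ↔
        ∃ i j, i ≠ j ∧ x ∈ L i ∧ y ∈ L j := by
  classical
  refine ⟨fun i => {v | ∃ o, v.1 = some ⟨i, o⟩}, ?_, ?_, fun i => ncard_L (hn i), ?_⟩
  · intro i j hij
    rw [Set.disjoint_left]
    rintro v ⟨o, ho⟩ ⟨o', ho'⟩
    rw [ho, Option.some.injEq] at ho'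
    exact hij (Sigma.mk.inj_iff.mp ho').1
  · ext v
    simp only [Set.mem_iUnion, Set.mem_univ, iff_true, Set.mem_setOf_eq]
    obtain ⟨i, o, h⟩ := leaf_shape hk v.2
    exact ⟨i, o, h⟩
  · intro x y
    constructor
    · rintro ⟨hxy, p, hp, e, he, hl⟩
      have hroot : (none : FitchTreeVert k n) ∈ e := by simpa [lamStar] using hl
      obtain ⟨x', hxleaf⟩ := x
      obtain ⟨y', hyleaf⟩ := y
      obtain ⟨i, o, rfl⟩ := leaf_shape hk hxleaf
      obtain ⟨i', o', rfl⟩ := leaf_shape hk hyleaf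
      refine ⟨i, i', ?_, ⟨o, rfl⟩, ⟨o', rfl⟩⟩
      intro heq
      subst heq
      cases o with
      | none =>
        cases o' with
        | none => exact hxy (Subtype.ext rfl)
        | some m =>
          have h2 : 2 ≤ n i := by
            by_contra h
            exact (Fin.cast (if_neg h) m).elim0
          exact not_isLeaf_child h2 hxleaf
      | some m =>
        cases o' with
        | none =>
          have h2 : 2 ≤ n i := by
            by_contra h
            exact (Fin.cast (if_neg h) m).elim0
          exact not_isLeaf_child h2 hyleaf
        | some m' => exact no_root_edge rfl rfl p hp e he hroot
    · rintro ⟨i, j, hij, ⟨o, hx⟩, ⟨o', hy⟩⟩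
      refine ⟨fun h => ?_, ?_⟩
      · have h1 : x.1 = y.1 := by rw [h]
        rw [hx, hy, Option.some.injEq] at h1
        exact hij (Sigma.mk.inj_iff.mp h1).1
      · suffices hs : ∃ q : (fitchTree k n).Walk (some ⟨i, o⟩) (some ⟨j, o'⟩),
            q.IsPath ∧ ∃ e ∈ q.edges, lamStar k n e = true by
          obtain ⟨q, hq, e, he, hl⟩ := hs
          exact ⟨q.copy hx.symm hy.symm, by simpa using hq, e, by simpa using he, hl⟩
        clear hx hy
        cases o with
        | none =>
          cases o' with
          | none =>
            refine ⟨.cons (adj_root_child i).symm (.cons (adj_root_child j) .nil),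
              ?_, s(some ⟨i, none⟩, none), by simp, by simp [lamStar]⟩
            simp [Walk.isPath_def, hij, Ne.symm hij]
          | some m' =>
            refine ⟨.cons (adj_root_child i).symm (.cons (adj_root_child j)
              (.cons (adj_child_grand j m') .nil)),
              ?_, s(some ⟨i, none⟩, none), by simp, by simp [lamStar]⟩
            simp [Walk.isPath_def, hij, Ne.symm hij]
        | some m =>
          cases o' with
          | none =>
            refine ⟨.cons (adj_child_grand i m).symm (.cons (adj_root_child i).symm
              (.cons (adj_root_child j) .nil)),
              ?_, s(some ⟨i, none⟩, none), by simp, by simp [lamStar]⟩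
            simp [Walk.isPath_def, hij, Ne.symm hij]
          | some m' =>
            refine ⟨.cons (adj_child_grand i m).symm (.cons (adj_root_child i).symm
              (.cons (adj_root_child j) (.cons (adj_child_grand j m') .nil))),
              ?_, s(some ⟨i, none⟩, none), by simp, by simp [lamStar]⟩
            simp [Walk.isPath_def, hij, Ne.symm hij]
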